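/- Let c_m, c_v ∈ R^n with c_m ≠ c_v, d ∈ R^n, and N ~ N(0, σ²I_n). Then the probability that ‖(N − d) + c_m − c_v‖ < ‖N − d‖ equals Q((‖c_m − c_v‖/2 + ⟨d, (c_v − c_m)/‖c_v − c_m‖⟩)/σ). -/

import Mathlib

open MeasureTheory ProbabilityTheory Real NNReal

/-- The standard Gaussian tail function `Q(h) = ∫_h^∞ (1/√(2π)) e^{−x²/2} dx`. -/
noncomputable def gaussQ (h : ℝ) : ℝ :=
  ∫ x in Set.Ioi h, (Real.sqrt (2 * Real.pi))⁻¹ * Real.exp (-x ^ 2 / 2)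

lemma convA {v1 v2 : ℝ≥0} (hv1 : v1 ≠ 0) (hv2 : v2 ≠ 0) (x a : ℝ) :
    gaussianPDFReal 0 v1 a * gaussianPDFReal 0 v2 (x - a) =
      gaussianPDFReal 0 (v1 + v2) x *
        gaussianPDFReal ((v1 : ℝ) * x / ((v1 : ℝ) + v2)) (v1 * v2 / (v1 + v2)) a := by
  have hr1 : (0:ℝ) < v1 := lt_of_le_of_ne (v1.coe_nonneg) (by exact_mod_cast (Ne.symm hv1))
  have hr2 : (0:ℝ) < v2 := lt_of_le_of_ne (v2.coe_nonneg) (by exact_mod_cast (Ne.symm hv2))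
  have hs : (0:ℝ) < (v1:ℝ) + v2 := by linarith
  simp only [gaussianPDFReal, NNReal.coe_add, NNReal.coe_div, NNReal.coe_mul]
  rw [mul_mul_mul_comm, ← mul_inv, ← Real.sqrt_mul (by positivity),
    mul_mul_mul_comm ((√(2 * π * ((v1:ℝ) + v2)))⁻¹), ← mul_inv,
    ← Real.sqrt_mul (by positivity), ← Real.exp_add, ← Real.exp_add]
  have h1 : 2 * π * (v1:ℝ) * (2 * π * (v2:ℝ)) =
      2 * π * ((v1:ℝ) + v2) * (2 * π * ((v1:ℝ) * v2 / ((v1:ℝ) + v2))) := by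
    field_simp
  have h2 : -(a - 0) ^ 2 / (2 * (v1:ℝ)) + -(x - a - 0) ^ 2 / (2 * (v2:ℝ)) =
      -(x - 0) ^ 2 / (2 * ((v1:ℝ) + v2)) +
        -(a - (v1:ℝ) * x / ((v1:ℝ) + v2)) ^ 2 / (2 * ((v1:ℝ) * v2 / ((v1:ℝ) + v2))) := by
    field_simp; ring
  rw [h1, h2]

lemma convA_int {v1 v2 : ℝ≥0} (hv1 : v1 ≠ 0) (hv2 : v2 ≠ 0) (x : ℝ) :
    ∫ a, gaussianPDFReal 0 v1 a * gaussianPDFReal 0 v2 (x - a) =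
      gaussianPDFReal 0 (v1 + v2) x := by
  have hv' : v1 * v2 / (v1 + v2) ≠ 0 := by
    simp [div_eq_zero_iff, hv1, hv2]
  rw [show (fun a => gaussianPDFReal 0 v1 a * gaussianPDFReal 0 v2 (x - a)) =
      fun a => gaussianPDFReal 0 (v1 + v2) x *
        gaussianPDFReal ((v1 : ℝ) * x / ((v1 : ℝ) + v2)) (v1 * v2 / (v1 + v2)) a from
      funext fun a => convA hv1 hv2 x a,
    MeasureTheory.integral_const_mul, integral_gaussianPDFReal_eq_one _ hv', mul_one]

lemma convA_integrable {v1 v2 : ℝ≥0} (hv1 : v1 ≠ 0) (hv2 : v2 ≠ 0) (x : ℝ) :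
    Integrable (fun a => gaussianPDFReal 0 v1 a * gaussianPDFReal 0 v2 (x - a)) := by
  rw [show (fun a => gaussianPDFReal 0 v1 a * gaussianPDFReal 0 v2 (x - a)) =
      fun a => gaussianPDFReal 0 (v1 + v2) x *
        gaussianPDFReal ((v1 : ℝ) * x / ((v1 : ℝ) + v2)) (v1 * v2 / (v1 + v2)) a from
      funext fun a => convA hv1 hv2 x a]
  exact (integrable_gaussianPDFReal _ _).const_mul _

lemma gaussianPDF_shift (a : ℝ) (v : ℝ≥0) (x : ℝ) :
    gaussianPDF a v x = gaussianPDF 0 v (x - a) := by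
  simp [gaussianPDF, gaussianPDFReal]

lemma gaussian_conv (v1 v2 : ℝ≥0) :
    Measure.map (fun p : ℝ × ℝ => p.1 + p.2)
        ((gaussianReal 0 v1).prod (gaussianReal 0 v2)) = gaussianReal 0 (v1 + v2) := by
  by_cases hv1 : v1 = 0
  · subst hv1
    rw [gaussianReal_zero_var, Measure.dirac_prod, zero_add,
      Measure.map_map measurable_add measurable_prodMk_left]
    have : (fun p : ℝ × ℝ => p.1 + p.2) ∘ Prod.mk (0:ℝ) = id := by
      funext b; simp
    rw [this, Measure.map_id]
  by_cases hv2 : v2 = 0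
  · subst hv2
    rw [gaussianReal_zero_var, Measure.prod_dirac, add_zero,
      Measure.map_map measurable_add measurable_prodMk_right]
    have : (fun p : ℝ × ℝ => p.1 + p.2) ∘ (fun x : ℝ => (x, (0:ℝ))) = id := by
      funext b; simp
    rw [this, Measure.map_id]
  have hv12 : v1 + v2 ≠ 0 := by simp [hv1, hv2]
  have hmeasu : Measurable (Function.uncurry fun a x : ℝ => gaussianPDF 0 v2 (x - a)) :=
    (measurable_gaussianPDF 0 v2).comp (measurable_snd.sub measurable_fst)
  ext s hs
  rw [Measure.map_apply measurable_add hs, Measure.prod_apply (measurable_add hs)]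
  have h2 : ∀ a : ℝ, gaussianReal 0 v2 (Prod.mk a ⁻¹' ((fun p : ℝ × ℝ => p.1 + p.2) ⁻¹' s))
      = ∫⁻ x in s, gaussianPDF 0 v2 (x - a) := by
    intro a
    have hpre : Prod.mk a ⁻¹' ((fun p : ℝ × ℝ => p.1 + p.2) ⁻¹' s)
        = (fun b => a + b) ⁻¹' s := rfl
    rw [hpre, ← Measure.map_apply (measurable_const_add a) hs,
      gaussianReal_map_const_add a, zero_add, gaussianReal_apply a hv2 s]
    exact lintegral_congr fun x => by rw [gaussianPDF_shift]
  have hmf : Measurable fun a : ℝ => ∫⁻ x in s, gaussianPDF 0 v2 (x - a) :=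
    Measurable.lintegral_prod_right' (f := fun p : ℝ × ℝ => gaussianPDF 0 v2 (p.2 - p.1))
      (ν := volume.restrict s) hmeasu
  rw [lintegral_congr h2, gaussianReal_of_var_ne_zero 0 hv1,
    lintegral_withDensity_eq_lintegral_mul _ (measurable_gaussianPDF 0 v1) hmf]
  simp only [Pi.mul_apply]
  have hm : ∀ a : ℝ, Measurable fun x : ℝ => gaussianPDF 0 v2 (x - a) :=
    fun a => (measurable_gaussianPDF 0 v2).comp (measurable_sub_const a)
  rw [lintegral_congr fun a => (lintegral_const_mul (μ := volume.restrict s)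
    (f := fun x => gaussianPDF 0 v2 (x - a)) (gaussianPDF 0 v1 a) (hm a)).symm,
    lintegral_lintegral_swap (((measurable_gaussianPDF 0 v1).comp
      measurable_fst).mul hmeasu).aemeasurable]
  have h3 : ∀ x : ℝ, ∫⁻ a, gaussianPDF 0 v1 a * gaussianPDF 0 v2 (x - a)
      = gaussianPDF 0 (v1 + v2) x := by
    intro x
    have : ∀ a : ℝ, gaussianPDF 0 v1 a * gaussianPDF 0 v2 (x - a)
        = ENNReal.ofReal (gaussianPDFReal 0 v1 a * gaussianPDFReal 0 v2 (x - a)) := by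
      intro a
      rw [gaussianPDF, gaussianPDF, ENNReal.ofReal_mul (gaussianPDFReal_nonneg _ _ _)]
    rw [lintegral_congr this,
      ← ofReal_integral_eq_lintegral_ofReal (convA_integrable hv1 hv2 x)
        (ae_of_all _ fun a => mul_nonneg (gaussianPDFReal_nonneg _ _ _)
          (gaussianPDFReal_nonneg _ _ _)),
      convA_int hv1 hv2 x]
    rfl
  rw [lintegral_congr fun x => h3 x, ← gaussianReal_apply 0 hv12 s]

lemma gaussian_pi_sum : ∀ {n : ℕ} (u : Fin n → ℝ) (v : ℝ≥0),
    Measure.map (fun x : Fin n → ℝ => ∑ i, u i * x i)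
      (Measure.pi fun _ : Fin n => gaussianReal 0 v)
    = gaussianReal 0 ((∑ i, (u i)^2).toNNReal * v) := by
  intro n
  induction n with
  | zero =>
    intro u v
    simp only [Finset.univ_eq_empty, Finset.sum_empty, Real.toNNReal_zero, zero_mul,
      gaussianReal_zero_var]
    rw [Measure.map_const]
    simp
  | succ n ih =>
    intro u v
    set e := MeasurableEquiv.piFinSuccAbove (fun _ : Fin (n + 1) => ℝ) 0 with he
    have hmp := measurePreserving_piFinSuccAbove (fun _ : Fin (n + 1) => gaussianReal 0 v) 0
    have hpi : (Measure.pi fun _ : Fin (n + 1) => gaussianReal 0 v)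
        = Measure.map e.symm ((gaussianReal 0 v).prod
            (Measure.pi fun _ : Fin n => gaussianReal 0 v)) := by
      rw [hmp.symm e |>.map_eq]
    have hS : Measurable fun x : Fin (n + 1) → ℝ => ∑ i, u i * x i := by
      exact Finset.measurable_sum _ fun i _ => (measurable_pi_apply i).const_mul _
    rw [hpi, Measure.map_map hS e.symm.measurable]
    have hcomp : (fun x : Fin (n + 1) → ℝ => ∑ i, u i * x i) ∘ e.symm
        = (fun p : ℝ × ℝ => p.1 + p.2) ∘
            (Prod.map (fun a : ℝ => u 0 * a) (fun y : Fin n → ℝ => ∑ i, u i.succ * y i)) := by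
      funext p
      simp [he, MeasurableEquiv.piFinSuccAbove_symm_apply, Fin.sum_univ_succ,
        Fin.insertNthEquiv, Fin.insertNth_zero, Fin.cons_zero, Fin.cons_succ]
    rw [hcomp, ← Measure.map_map measurable_add
        ((measurable_const_mul (u 0)).prodMap (Finset.measurable_sum _
          fun i _ => (measurable_pi_apply i).const_mul _)),
      ← Measure.map_prod_map _ _ (measurable_const_mul (u 0))
        (Finset.measurable_sum _ fun i _ => (measurable_pi_apply i).const_mul _),
      gaussianReal_map_const_mul (u 0), ih (fun i => u i.succ) v, mul_zero,
      gaussian_conv]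
    congr 1
    rw [Fin.sum_univ_succ, Real.toNNReal_add (sq_nonneg _)
      (Finset.sum_nonneg fun i _ => sq_nonneg _), add_mul]
    congr 2
    ext
    simp [Real.coe_toNNReal _ (sq_nonneg (u 0))]

/-- For distinct codewords `c_m ≠ c_v`, fixed `d`, and `N ~ N(0, σ²Iₙ)`,
`P(‖(N − d) + c_m − c_v‖ < ‖N − d‖)
  = Q((‖c_m − c_v‖/2 + ⟨d, (c_v − c_m)/‖c_v − c_m‖⟩)/σ)`. -/
theorem stmt11 {Ω : Type*} [MeasurableSpace Ω] (P : Measure Ω) [IsProbabilityMeasure P]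
    {n : ℕ} (σ : ℝ) (hσ : 0 < σ) (N : Ω → Fin n → ℝ) (hNmeas : Measurable N)
    (hN : Measure.map N P = Measure.pi fun _ : Fin n => gaussianReal 0 (σ ^ 2).toNNReal)
    (cm cv d : Fin n → ℝ) (hne : cm ≠ cv) :
    P {ω | Real.sqrt (∑ i, ((N ω i - d i) + cm i - cv i) ^ 2)
            < Real.sqrt (∑ i, (N ω i - d i) ^ 2)}
      = ENNReal.ofReal (gaussQ ((Real.sqrt (∑ i, (cm i - cv i) ^ 2) / 2
          + ∑ i, d i * ((cv i - cm i) / Real.sqrt (∑ j, (cv j - cm j) ^ 2))) / σ)) := by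
  set u : Fin n → ℝ := fun i => cm i - cv i with hu
  set t : ℝ := (∑ i, u i * d i) - (∑ i, u i ^ 2) / 2 with ht
  -- positivity of ∑ u²
  obtain ⟨i0, hi0⟩ := Function.ne_iff.mp hne
  have hS2 : 0 < ∑ i, u i ^ 2 :=
    Finset.sum_pos' (fun i _ => sq_nonneg _)
      ⟨i0, Finset.mem_univ _, by
        have : u i0 ≠ 0 := sub_ne_zero.mpr hi0
        positivity⟩
  set r : ℝ := Real.sqrt (∑ i, u i ^ 2) with hr
  have hrpos : 0 < r := Real.sqrt_pos.mpr hS2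
  have hr2 : r ^ 2 = ∑ i, u i ^ 2 := Real.sq_sqrt hS2.le
  -- event rewrite
  have hset : {ω | Real.sqrt (∑ i, ((N ω i - d i) + cm i - cv i) ^ 2)
      < Real.sqrt (∑ i, (N ω i - d i) ^ 2)}
      = (fun ω => ∑ i, u i * N ω i) ⁻¹' Set.Iio t := by
    ext ω
    have h1 : Real.sqrt (∑ i, ((N ω i - d i) + cm i - cv i) ^ 2)
        < Real.sqrt (∑ i, (N ω i - d i) ^ 2)
        ↔ (∑ i, ((N ω i - d i) + cm i - cv i) ^ 2) < ∑ i, (N ω i - d i) ^ 2 :=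
      Real.sqrt_lt_sqrt_iff (Finset.sum_nonneg fun i _ => sq_nonneg _)
    have h2 : (∑ i, ((N ω i - d i) + cm i - cv i) ^ 2) - (∑ i, (N ω i - d i) ^ 2)
        = 2 * ((∑ i, u i * N ω i) - t) := by
      rw [← Finset.sum_sub_distrib]
      have : ∀ i ∈ Finset.univ, ((N ω i - d i) + cm i - cv i) ^ 2 - (N ω i - d i) ^ 2
          = 2 * (u i * N ω i) - 2 * (u i * d i) + u i ^ 2 := fun i _ => by
        simp only [hu]; ring
      rw [Finset.sum_congr rfl this, Finset.sum_add_distrib, Finset.sum_sub_distrib,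
        ← Finset.mul_sum, ← Finset.mul_sum, ht]
      ring
    simp only [Set.mem_setOf_eq, Set.mem_preimage, Set.mem_Iio, h1]
    constructor
    · intro h; nlinarith [h2]
    · intro h; nlinarith [h2]
  -- push forward
  have hSmeas : Measurable fun x : Fin n → ℝ => ∑ i, u i * x i :=
    Finset.measurable_sum _ fun i _ => (measurable_pi_apply i).const_mul _
  rw [hset, ← Measure.map_apply (f := fun ω => ∑ i, u i * N ω i)
    (hSmeas.comp hNmeas) measurableSet_Iio]
  have : Measure.map (fun ω => ∑ i, u i * N ω i) P
      = gaussianReal 0 ((∑ i, u i ^ 2).toNNReal * (σ ^ 2).toNNReal) := by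
    rw [show (fun ω => ∑ i, u i * N ω i) = (fun x : Fin n → ℝ => ∑ i, u i * x i) ∘ N from rfl,
      ← Measure.map_map hSmeas hNmeas, hN, gaussian_pi_sum]
  rw [this]
  -- reduce Gaussian CDF to standard Gaussian
  set c : ℝ := -(r * σ) with hc
  have hcneg : c < 0 := by simp only [hc]; nlinarith
  have hmap : Measure.map (c * ·) (gaussianReal 0 1)
      = gaussianReal 0 ((∑ i, u i ^ 2).toNNReal * (σ ^ 2).toNNReal) := by
    rw [gaussianReal_map_const_mul c, mul_zero]
    congr 1
    ext
    push_cast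
    rw [Real.coe_toNNReal _ hS2.le, Real.coe_toNNReal _ (sq_nonneg σ)]
    simp only [hc]
    nlinarith
  rw [← hmap, Measure.map_apply (measurable_const_mul c) measurableSet_Iio]
  have hpre : (c * ·) ⁻¹' Set.Iio t = Set.Ioi (t / c) := by
    ext x
    simp only [Set.mem_preimage, Set.mem_Iio, Set.mem_Ioi]
    rw [div_lt_iff_of_neg hcneg, mul_comm]
  rw [hpre, gaussianReal_apply_eq_integral 0 one_ne_zero _]
  -- identify the argument
  have harg : t / c = (Real.sqrt (∑ i, (cm i - cv i) ^ 2) / 2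
      + ∑ i, d i * ((cv i - cm i) / Real.sqrt (∑ j, (cv j - cm j) ^ 2))) / σ := by
    have hsq : ∀ j, (cv j - cm j) ^ 2 = u j ^ 2 := fun j => by simp only [hu]; ring
    have hsum : (∑ j, (cv j - cm j) ^ 2) = ∑ j, u j ^ 2 :=
      Finset.sum_congr rfl fun j _ => hsq j
    have hsum2 : (∑ i, (cm i - cv i) ^ 2) = ∑ i, u i ^ 2 := rfl
    rw [hsum2, hsum, ← hr]
    have : (∑ i, d i * ((cv i - cm i) / r)) = (-(∑ i, u i * d i)) / r := by
      rw [← Finset.sum_neg_distrib, Finset.sum_div]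
      refine Finset.sum_congr rfl fun i _ => ?_
      simp only [hu]
      field_simp
      ring
    rw [this, ht, hc]
    field_simp
    nlinarith [hr2]
  rw [harg]
  congr 1
  rw [gaussQ]
  refine setIntegral_congr_fun measurableSet_Ioi fun x _ => ?_
  simp [gaussianPDFReal]
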